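/- arXiv:2304.12273 — 2 statements merged into one kernel-verified Lean document; each statement's English description precedes it below -/
import Mathlib

section
/- The optimization problem V_t := inf_α ∫_t^1 c(s)·α(s)·(∫_s^1 α(r) dr) ds is time inconsistent: there is no single admissible control α* that attains the infimum V_t simultaneously for all t ∈ [0,1). -/
open MeasureTheory Set

noncomputable def tn (n : ℕ) : ℝ := 1 - 1 / 2 ^ n
noncomputable def sn (n : ℕ) : ℝ := (tn n + 3 * tn (n + 1)) / 4
noncomputable def c (x : ℝ) : ℝ :=
  ∑' n : ℕ, ((Ico (tn n) (sn n)).indicator (fun _ => (1 : ℝ)) x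
    + 6 * (Ico (sn n) (tn (n + 1))).indicator (fun _ => (1 : ℝ)) x)
noncomputable def J (t : ℝ) (α : ℝ → ℝ) : ℝ :=
  ∫ s in t..1, c s * α s * ∫ r in s..1, α r

def Admissible (α : ℝ → ℝ) : Prop := Measurable α ∧ ∀ x, α x ∈ Icc (-1 : ℝ) 1

noncomputable def cterm (n : ℕ) (x : ℝ) : ℝ :=
  (Ico (tn n) (sn n)).indicator (fun _ => (1 : ℝ)) x
    + 6 * (Ico (sn n) (tn (n + 1))).indicator (fun _ => (1 : ℝ)) x

lemma c_eq_tsum (x : ℝ) : c x = ∑' n, cterm n x := rfl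

lemma tn_lt (n : ℕ) : tn n < tn (n + 1) := by
  have h := one_div_lt_one_div_of_lt (pow_pos (by norm_num : (0:ℝ) < 2) n)
    (pow_lt_pow_right₀ (by norm_num : (1:ℝ) < 2) (Nat.lt_succ_self n))
  simp only [Nat.succ_eq_add_one] at h
  unfold tn; linarith

lemma tn_mono : StrictMono tn := strictMono_nat_of_lt_succ tn_lt

lemma tn_nonneg (n : ℕ) : 0 ≤ tn n := by
  have : (1:ℝ)/2^n ≤ 1 := by
    rw [div_le_one (by positivity)]
    exact one_le_pow₀ (by norm_num)
  unfold tn; linarith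

lemma tn_lt_one (n : ℕ) : tn n < 1 := by
  have : (0:ℝ) < 1/2^n := by positivity
  unfold tn; linarith

lemma sn_mem (n : ℕ) : tn n < sn n ∧ sn n < tn (n + 1) := by
  have h := tn_lt n
  constructor <;> (unfold sn; nlinarith)

lemma tn_zero : tn 0 = 0 := by norm_num [tn]

/-- any point of [0,1) lies in some block [tn n, tn (n+1)) -/
lemma exists_block {x : ℝ} (h0 : 0 ≤ x) (h1 : x < 1) :
    ∃ n, tn n ≤ x ∧ x < tn (n + 1) := by
  have hpow : ∀ k : ℕ, ((1/2:ℝ)) ^ k = 1/2^k := by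
    intro k; rw [div_pow, one_pow]
  have hex : ∃ k : ℕ, (1/2:ℝ) ^ (k+1) < 1 - x := by
    obtain ⟨k, hk⟩ := exists_pow_lt_of_lt_one (by linarith : (0:ℝ) < 1 - x)
      (by norm_num : (1/2:ℝ) < 1)
    exact ⟨k, lt_of_le_of_lt (pow_le_pow_of_le_one (by norm_num) (by norm_num)
      (Nat.le_succ k)) hk⟩
  classical
  refine ⟨Nat.find hex, ?_, ?_⟩
  · rcases Nat.eq_zero_or_pos (Nat.find hex) with h0 | h0
    · rw [h0, tn_zero]; exact ‹0 ≤ x›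
    · obtain ⟨m, hm⟩ := Nat.exists_eq_add_of_lt h0
      have hnot := Nat.find_min hex (m := m) (by omega)
      have : (1 - x) ≤ (1/2:ℝ) ^ (m+1) := not_lt.1 hnot
      rw [hpow] at this
      have hmm : Nat.find hex = m + 1 := by omega
      rw [hmm]
      unfold tn; linarith
  · have := Nat.find_spec hex
    rw [hpow] at this
    unfold tn; linarith

lemma not_mem_cterm {x : ℝ} {m : ℕ} (h : x ∉ Ico (tn m) (tn (m + 1))) : cterm m x = 0 := by
  have h1 : x ∉ Ico (tn m) (sn m) := by
    intro hx
    exact h ⟨hx.1, hx.2.trans (sn_mem m).2⟩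
  have h2 : x ∉ Ico (sn m) (tn (m + 1)) := by
    intro hx
    exact h ⟨(le_of_lt (sn_mem m).1).trans hx.1, hx.2⟩
  simp [cterm, indicator_of_notMem h1, indicator_of_notMem h2]

lemma cterm_block {x : ℝ} {n : ℕ} (h1 : tn n ≤ x) (h2 : x < tn (n + 1)) :
    cterm n x = if x < sn n then 1 else 6 := by
  by_cases h : x < sn n
  · rw [if_pos h]
    have : x ∉ Ico (sn n) (tn (n+1)) := fun hx => absurd h (not_lt.2 hx.1)
    simp [cterm, indicator_of_mem (mem_Ico.2 ⟨h1, h⟩), indicator_of_notMem this]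
  · rw [if_neg h]
    have hx1 : x ∉ Ico (tn n) (sn n) := fun hx => h hx.2
    simp [cterm, indicator_of_notMem hx1,
      indicator_of_mem (mem_Ico.2 ⟨not_lt.1 h, h2⟩)]

lemma cterm_ne {x : ℝ} {n m : ℕ} (h1 : tn n ≤ x) (h2 : x < tn (n + 1)) (hm : m ≠ n) :
    cterm m x = 0 := by
  apply not_mem_cterm
  rcases lt_or_gt_of_ne hm with h | h
  · intro hx
    exact absurd h1 (not_le.2 (lt_of_lt_of_le hx.2 (tn_mono.monotone h)))
  · intro hx
    exact absurd hx.1 (not_le.2 (lt_of_lt_of_le h2 (tn_mono.monotone (Nat.succ_le_of_lt h))))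

lemma c_block {x : ℝ} {n : ℕ} (h1 : tn n ≤ x) (h2 : x < tn (n + 1)) :
    c x = if x < sn n then 1 else 6 := by
  rw [c_eq_tsum, tsum_eq_single n (fun m hm => cterm_ne h1 h2 hm), cterm_block h1 h2]

lemma c_out {x : ℝ} (h : x < 0 ∨ 1 ≤ x) : c x = 0 := by
  rw [c_eq_tsum]
  convert tsum_zero with m
  apply not_mem_cterm
  rcases h with h | h
  · exact fun hx => absurd (lt_of_lt_of_le h (tn_nonneg m)) (not_lt.2 hx.1)
  · exact fun hx => absurd hx.2 (not_lt.2 ((tn_lt_one (m+1)).le.trans h))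

lemma c_one_le {x : ℝ} (h0 : 0 ≤ x) (h1 : x < 1) : 1 ≤ c x := by
  obtain ⟨n, hn1, hn2⟩ := exists_block h0 h1
  rw [c_block hn1 hn2]
  split <;> norm_num

lemma c_nonneg (x : ℝ) : 0 ≤ c x := by
  rcases lt_or_ge x 0 with h | h
  · rw [c_out (Or.inl h)]
  rcases lt_or_ge x 1 with h1 | h1
  · linarith [c_one_le h h1]
  · rw [c_out (Or.inr h1)]

lemma c_le_six (x : ℝ) : c x ≤ 6 := by
  rcases lt_or_ge x 0 with h | h
  · rw [c_out (Or.inl h)]; norm_num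
  rcases lt_or_ge x 1 with h1 | h1
  · obtain ⟨n, hn1, hn2⟩ := exists_block h h1
    rw [c_block hn1 hn2]; split <;> norm_num
  · rw [c_out (Or.inr h1)]; norm_num

lemma cterm_measurable (n : ℕ) : Measurable (cterm n) := by
  unfold cterm
  exact ((measurable_const.indicator measurableSet_Ico)).add
    ((measurable_const.indicator measurableSet_Ico).const_mul 6)

lemma c_measurable : Measurable c := by
  have : ∀ x, Filter.Tendsto (fun N => ∑ n ∈ Finset.range N, cterm n x)
      Filter.atTop (nhds (c x)) := by
    intro x
    have hsum : Summable (fun n => cterm n x) := by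
      rcases lt_or_ge x 0 with h | h
      · apply summable_of_ne_finset_zero (s := ∅)
        intro m _
        exact not_mem_cterm (fun hx => absurd (lt_of_lt_of_le h (tn_nonneg m)) (not_lt.2 hx.1))
      rcases lt_or_ge x 1 with h1 | h1
      · obtain ⟨n, hn1, hn2⟩ := exists_block h h1
        apply summable_of_ne_finset_zero (s := {n})
        intro m hm
        exact cterm_ne hn1 hn2 (by simpa using hm)
      · apply summable_of_ne_finset_zero (s := ∅)
        intro m _
        exact not_mem_cterm
          (fun hx => absurd hx.2 (not_lt.2 ((tn_lt_one (m+1)).le.trans h1)))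
    exact hsum.hasSum.tendsto_sum_nat
  exact measurable_of_tendsto_metrizable
    (fun N => Finset.measurable_sum _ (fun n _ => cterm_measurable n)) (tendsto_pi_nhds.2 this)
noncomputable def Ia (α : ℝ → ℝ) (s : ℝ) : ℝ := ∫ r in s..1, α r

lemma J_eq (t : ℝ) (α : ℝ → ℝ) : J t α = ∫ s in t..1, c s * α s * Ia α s := rfl

lemma adm_abs {α : ℝ → ℝ} (h : Admissible α) (x : ℝ) : |α x| ≤ 1 :=
  abs_le.2 ⟨(h.2 x).1, (h.2 x).2⟩

lemma intervalIntegrable_of_bdd {f : ℝ → ℝ} (hf : Measurable f) {a b C : ℝ}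
    (hC : ∀ x ∈ uIoc a b, |f x| ≤ C) : IntervalIntegrable f volume a b := by
  rw [intervalIntegrable_iff]
  have : IsFiniteMeasure (volume.restrict (uIoc a b)) := by
    constructor
    rw [Measure.restrict_apply_univ]
    exact measure_Ioc_lt_top
  apply Integrable.mono' (integrable_const C) hf.aestronglyMeasurable.restrict
  rw [ae_restrict_iff' measurableSet_uIoc]
  exact Filter.Eventually.of_forall (fun x hx => by rw [Real.norm_eq_abs]; exact hC x hx)

lemma II01 {f : ℝ → ℝ} (hf : Measurable f) {C : ℝ} (hC : ∀ x ∈ Icc (0:ℝ) 1, |f x| ≤ C)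
    {a b : ℝ} (ha : a ∈ Icc (0:ℝ) 1) (hb : b ∈ Icc (0:ℝ) 1) :
    IntervalIntegrable f volume a b :=
  intervalIntegrable_of_bdd hf (fun x hx => hC x
    ⟨le_trans (le_min ha.1 hb.1) (le_of_lt hx.1), le_trans hx.2 (max_le ha.2 hb.2)⟩)

lemma adm_II {α : ℝ → ℝ} (h : Admissible α) (a b : ℝ) : IntervalIntegrable α volume a b :=
  intervalIntegrable_of_bdd h.1 (fun x _ => adm_abs h x)

lemma Ia_sub {α : ℝ → ℝ} (h : Admissible α) (a b : ℝ) :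
    Ia α a - Ia α b = ∫ x in a..b, α x := by
  have h1 := intervalIntegral.integral_interval_sub_left (adm_II h 1 b) (adm_II h 1 a)
  unfold Ia
  rw [intervalIntegral.integral_symm 1 a, intervalIntegral.integral_symm 1 b]
  linarith [h1]

lemma Ia_one (α : ℝ → ℝ) : Ia α 1 = 0 := intervalIntegral.integral_same

lemma Ia_lip {α : ℝ → ℝ} (h : Admissible α) (a b : ℝ) : |Ia α a - Ia α b| ≤ |b - a| := by
  rw [Ia_sub h]
  have := intervalIntegral.norm_integral_le_of_norm_le_const (C := 1) (f := α)
    (a := a) (b := b) (fun x _ => by rw [Real.norm_eq_abs]; exact adm_abs h x)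
  rw [Real.norm_eq_abs] at this
  linarith

lemma Ia_cont {α : ℝ → ℝ} (h : Admissible α) : Continuous (Ia α) := by
  have : LipschitzWith 1 (Ia α) := by
    apply LipschitzWith.of_dist_le_mul
    intro x y
    rw [Real.dist_eq, Real.dist_eq, NNReal.coe_one, one_mul, abs_sub_comm x y]
    exact Ia_lip h x y
  exact this.continuous

lemma Ia_bdd {α : ℝ → ℝ} (h : Admissible α) {s : ℝ} (hs : s ∈ Icc (0:ℝ) 1) :
    |Ia α s| ≤ 1 := by
  have := Ia_lip h s 1
  rw [Ia_one] at this
  simp only [sub_zero] at this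
  have h2 : |1 - s| ≤ 1 := by rw [abs_le]; constructor <;> linarith [hs.1, hs.2]
  linarith

lemma integrand_meas {α : ℝ → ℝ} (h : Admissible α) :
    Measurable (fun s => c s * α s * Ia α s) :=
  (c_measurable.mul h.1).mul (Ia_cont h).measurable

lemma integrand_abs {α : ℝ → ℝ} (h : Admissible α) {x : ℝ} (hx : x ∈ Icc (0:ℝ) 1) :
    |c x * α x * Ia α x| ≤ 6 := by
  rw [abs_mul, abs_mul]
  have h1 : |c x| ≤ 6 := by rw [abs_of_nonneg (c_nonneg x)]; exact c_le_six x
  have h2 := adm_abs h x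
  have h3 := Ia_bdd h hx
  have : |c x| * |α x| * |Ia α x| ≤ 6 * 1 * 1 := by
    apply mul_le_mul (mul_le_mul h1 h2 (abs_nonneg _) (by norm_num)) h3 (abs_nonneg _)
    norm_num
  linarith

lemma integrand_II {α : ℝ → ℝ} (h : Admissible α) {a b : ℝ}
    (ha : a ∈ Icc (0:ℝ) 1) (hb : b ∈ Icc (0:ℝ) 1) :
    IntervalIntegrable (fun s => c s * α s * Ia α s) volume a b :=
  II01 (integrand_meas h) (fun x hx => integrand_abs h hx) ha hb

lemma intervalIntegral_congr_Ioo {f g : ℝ → ℝ} {a b : ℝ} (hab : a ≤ b)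
    (h : ∀ x ∈ Ioo a b, f x = g x) : ∫ x in a..b, f x = ∫ x in a..b, g x := by
  rw [intervalIntegral.integral_of_le hab, intervalIntegral.integral_of_le hab,
    integral_Ioc_eq_integral_Ioo, integral_Ioc_eq_integral_Ioo]
  exact setIntegral_congr_fun measurableSet_Ioo h
section Main

variable {αs : ℝ → ℝ}

lemma J_split {α : ℝ → ℝ} (h : Admissible α) {p q : ℝ} (hp : p ∈ Icc (0:ℝ) 1)
    (hq : q ∈ Icc (0:ℝ) 1) :
    J p α = (∫ s in p..q, c s * α s * Ia α s) + J q α := by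
  rw [J_eq, J_eq]
  exact (intervalIntegral.integral_add_adjacent_intervals (integrand_II h hp hq)
    (integrand_II h hq (by norm_num))).symm

/-- the fundamental consequence of optimality: constant-v perturbation on [p,q) -/
lemma star (hadm : Admissible αs)
    (hopt : ∀ t ∈ Ico (0 : ℝ) 1, ∀ α : ℝ → ℝ, Admissible α → J t αs ≤ J t α)
    {p q v : ℝ} (hp : 0 ≤ p) (hpq : p < q) (hq : q ≤ 1) (hv : |v| ≤ 1) :
    (∫ s in p..q, c s * αs s * Ia αs s) ≤
      v^2 * (∫ s in p..q, c s * (q - s)) + (v * Ia αs q) * (∫ s in p..q, c s) := by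
  set β : ℝ → ℝ := fun x => if x < q then v else αs x with hβdef
  have hβ : Admissible β := by
    constructor
    · exact Measurable.ite measurableSet_Iio measurable_const hadm.1
    · intro x
      by_cases hx : x < q
      · simp only [hβdef, if_pos hx]
        exact ⟨neg_le_of_abs_le hv, le_of_abs_le hv⟩
      · simp only [hβdef, if_neg hx]
        exact hadm.2 x
  have hp1 : p ∈ Icc (0:ℝ) 1 := ⟨hp, le_trans (le_of_lt hpq) hq⟩
  have hq1 : q ∈ Icc (0:ℝ) 1 := ⟨le_trans hp (le_of_lt hpq), hq⟩
  -- Ia β agrees with Ia αs from q on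
  have hIae : ∀ s, q ≤ s → s ≤ 1 → Ia β s = Ia αs s := by
    intro s hs hs1
    apply intervalIntegral.integral_congr
    intro x hx
    rw [uIcc_of_le hs1] at hx
    simp only [hβdef]
    rw [if_neg (not_lt.2 (hs.trans hx.1))]
  -- Ia β on [p,q]
  have hIab : ∀ s, p ≤ s → s ≤ q → Ia β s = v * (q - s) + Ia αs q := by
    intro s hs hsq
    have h1 : Ia β s = (∫ x in s..q, β x) + ∫ x in q..1, β x := by
      unfold Ia
      exact (intervalIntegral.integral_add_adjacent_intervals (adm_II hβ s q)
        (adm_II hβ q 1)).symm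
    have h2 : (∫ x in s..q, β x) = ∫ x in s..q, v := by
      apply intervalIntegral_congr_Ioo hsq
      intro x hx
      simp only [hβdef]
      rw [if_pos hx.2]
    have h3 : (∫ x in q..1, β x) = Ia αs q := hIae q le_rfl hq
    rw [h1, h2, h3, intervalIntegral.integral_const, smul_eq_mul]
    ring
  -- J q β = J q αs
  have hJq : J q β = J q αs := by
    rw [J_eq, J_eq]
    apply intervalIntegral.integral_congr
    intro x hx
    rw [uIcc_of_le hq] at hx
    have hb : β x = αs x := by simp only [hβdef]; rw [if_neg (not_lt.2 hx.1)]
    show c x * β x * Ia β x = c x * αs x * Ia αs x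
    rw [hb, hIae x hx.1 hx.2]
  -- first piece of J p β
  have hJfirst : (∫ s in p..q, c s * β s * Ia β s)
      = v^2 * (∫ s in p..q, c s * (q - s)) + (v * Ia αs q) * (∫ s in p..q, c s) := by
    have h1 : (∫ s in p..q, c s * β s * Ia β s)
        = ∫ s in p..q, (v^2 * (c s * (q - s)) + (v * Ia αs q) * c s) := by
      apply intervalIntegral_congr_Ioo (le_of_lt hpq)
      intro x hx
      have hb : β x = v := by simp only [hβdef]; rw [if_pos hx.2]
      rw [hb, hIab x (le_of_lt hx.1) (le_of_lt hx.2)]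
      ring
    have hII1 : IntervalIntegrable (fun s => v^2 * (c s * (q - s))) volume p q := by
      apply II01 (hf := ((c_measurable.mul ((measurable_const.sub measurable_id)))).const_mul _)
        (C := 6 * 1) _ hp1 hq1
      intro x hx
      show |v^2 * (c x * (q - id x))| ≤ 6 * 1
      rw [abs_mul, abs_mul]
      simp only [id_eq]
      have h6 : |c x| ≤ 6 := by rw [abs_of_nonneg (c_nonneg x)]; exact c_le_six x
      have hqx : |q - x| ≤ 1 := by
        rw [abs_le]; constructor <;> nlinarith [hx.1, hx.2, hq1.1, hq1.2]
      have hv2 : |v^2| ≤ 1 := by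
        rw [abs_pow]
        calc |v|^2 ≤ 1^2 := by nlinarith [abs_nonneg v]
        _ = 1 := one_pow 2
      have hprod : |c x| * |q - x| ≤ 6 := by
        calc |c x| * |q - x| ≤ 6 * 1 := mul_le_mul h6 hqx (abs_nonneg _) (by norm_num)
        _ = 6 := by norm_num
      nlinarith [abs_nonneg (c x), abs_nonneg (q - x), abs_nonneg (v^2),
        mul_nonneg (abs_nonneg (c x)) (abs_nonneg (q - x))]
    have hII2 : IntervalIntegrable (fun s => (v * Ia αs q) * c s) volume p q := by
      apply II01 (hf := c_measurable.const_mul _) (C := |v * Ia αs q| * 6) _ hp1 hq1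
      intro x _
      rw [abs_mul]
      have h6 : |c x| ≤ 6 := by rw [abs_of_nonneg (c_nonneg x)]; exact c_le_six x
      nlinarith [abs_nonneg (v * Ia αs q)]
    rw [h1, intervalIntegral.integral_add hII1 hII2,
      intervalIntegral.integral_const_mul, intervalIntegral.integral_const_mul]
  -- optimality
  have hle : J p αs ≤ J p β := hopt p ⟨hp, lt_of_lt_of_le hpq hq⟩ β hβ
  rw [J_split hadm hp1 hq1, J_split hβ hp1 hq1, hJq, hJfirst] at hle
  linarith

lemma abs_c_le (x : ℝ) : |c x| ≤ 6 := by
  rw [abs_of_nonneg (c_nonneg x)]; exact c_le_six x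

lemma key1 (hadm : Admissible αs)
    (hopt : ∀ t ∈ Ico (0 : ℝ) 1, ∀ α : ℝ → ℝ, Admissible α → J t αs ≤ J t α)
    {p q v : ℝ} (hp : 0 ≤ p) (hpq : p ≤ q) (hq : q ≤ 1) (hv : v = 1 ∨ v = -1) :
    (∫ s in p..q, c s * (αs s - v) * Ia αs s) ≤ 12 * (q - p)^2 := by
  rcases eq_or_lt_of_le hpq with heq | hlt
  · rw [← heq, intervalIntegral.integral_same]
    norm_num
  have hp1 : p ∈ Icc (0:ℝ) 1 := ⟨hp, hpq.trans hq⟩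
  have hq1 : q ∈ Icc (0:ℝ) 1 := ⟨hp.trans hpq, hq⟩
  have hv1 : |v| ≤ 1 := by rcases hv with h | h <;> rw [h] <;> norm_num
  have hv2 : v^2 = 1 := by rcases hv with h | h <;> rw [h] <;> norm_num
  have hstar := star hadm hopt hp hlt hq hv1
  have hIIcA : IntervalIntegrable (fun s => c s * Ia αs s) volume p q := by
    apply II01 (c_measurable.mul (Ia_cont hadm).measurable) (C := 6) _ hp1 hq1
    intro x hx
    show |c x * Ia αs x| ≤ 6
    rw [abs_mul]
    nlinarith [abs_c_le x, Ia_bdd hadm hx, abs_nonneg (c x), abs_nonneg (Ia αs x)]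
  have hsplit : (∫ s in p..q, c s * (αs s - v) * Ia αs s)
      = (∫ s in p..q, c s * αs s * Ia αs s) - v * ∫ s in p..q, c s * Ia αs s := by
    rw [← intervalIntegral.integral_const_mul,
      ← intervalIntegral.integral_sub (integrand_II hadm hp1 hq1) (hIIcA.const_mul v)]
    apply intervalIntegral.integral_congr
    intro x _
    show c x * (αs x - v) * Ia αs x = c x * αs x * Ia αs x - v * (c x * Ia αs x)
    ring
  have hlin : (v * Ia αs q) * (∫ s in p..q, c s) - v * (∫ s in p..q, c s * Ia αs s)
      = v * (∫ s in p..q, c s * (Ia αs q - Ia αs s)) := by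
    have hIIc : IntervalIntegrable c volume p q :=
      II01 c_measurable (fun x _ => abs_c_le x) hp1 hq1
    have h1 : (∫ s in p..q, c s * (Ia αs q - Ia αs s))
        = (∫ s in p..q, c s * Ia αs q) - ∫ s in p..q, c s * Ia αs s := by
      rw [← intervalIntegral.integral_sub (hIIc.mul_const _) hIIcA]
      apply intervalIntegral.integral_congr
      intro x _
      show c x * (Ia αs q - Ia αs x) = c x * Ia αs q - c x * Ia αs x
      ring
    rw [h1, intervalIntegral.integral_mul_const]
    ring
  have hR1 : |∫ s in p..q, c s * (q - s)| ≤ 6 * (q - p) * |q - p| := by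
    have h0 := intervalIntegral.norm_integral_le_of_norm_le_const (a := p) (b := q)
      (C := 6 * (q - p)) (f := fun s => c s * (q - s)) ?_
    · rw [Real.norm_eq_abs] at h0; exact h0
    intro x hx
    rw [uIoc_of_le hpq] at hx
    rw [Real.norm_eq_abs, abs_mul]
    have h2 : |q - x| ≤ q - p := by rw [abs_le]; constructor <;> linarith [hx.1, hx.2]
    nlinarith [abs_c_le x, abs_nonneg (c x), abs_nonneg (q - x), hlt]
  have hR2 : |∫ s in p..q, c s * (Ia αs q - Ia αs s)| ≤ 6 * (q - p) * |q - p| := by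
    have h0 := intervalIntegral.norm_integral_le_of_norm_le_const (a := p) (b := q)
      (C := 6 * (q - p)) (f := fun s => c s * (Ia αs q - Ia αs s)) ?_
    · rw [Real.norm_eq_abs] at h0; exact h0
    intro x hx
    rw [uIoc_of_le hpq] at hx
    rw [Real.norm_eq_abs, abs_mul]
    have h2 : |Ia αs q - Ia αs x| ≤ q - p := by
      have := Ia_lip hadm q x
      have h3 : |x - q| ≤ q - p := by rw [abs_le]; constructor <;> linarith [hx.1, hx.2]
      linarith
    nlinarith [abs_c_le x, abs_nonneg (c x), abs_nonneg (Ia αs q - Ia αs x), hlt]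
  rw [abs_of_nonneg (by linarith : (0:ℝ) ≤ q - p)] at hR1 hR2
  have hvmul : v * (∫ s in p..q, c s * (Ia αs q - Ia αs s)) ≤ 6 * (q - p) * (q - p) := by
    have := neg_abs_le (∫ s in p..q, c s * (Ia αs q - Ia αs s))
    have := le_abs_self (∫ s in p..q, c s * (Ia αs q - Ia αs s))
    rcases hv with h | h <;> rw [h] <;> nlinarith
  have hR1' : v^2 * (∫ s in p..q, c s * (q - s)) ≤ 6 * (q - p) * (q - p) := by
    rw [hv2, one_mul]
    linarith [le_abs_self (∫ s in p..q, c s * (q - s))]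
  rw [hsplit]
  have := hstar
  nlinarith [this]

lemma key2 (hadm : Admissible αs)
    (hopt : ∀ t ∈ Ico (0 : ℝ) 1, ∀ α : ℝ → ℝ, Admissible α → J t αs ≤ J t α)
    {a b v : ℝ} (ha : 0 ≤ a) (hab : a ≤ b) (hb : b ≤ 1) (hv : v = 1 ∨ v = -1) :
    (∫ s in a..b, c s * (αs s - v) * Ia αs s) ≤ 0 := by
  set f := fun s => c s * (αs s - v) * Ia αs s with hfdef
  have hv1 : |v| ≤ 1 := by rcases hv with h | h <;> rw [h] <;> norm_num
  have hfm : Measurable f :=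
    (c_measurable.mul (hadm.1.sub measurable_const)).mul (Ia_cont hadm).measurable
  have hfb : ∀ x ∈ Icc (0:ℝ) 1, |f x| ≤ 12 := by
    intro x hx
    simp only [hfdef, abs_mul]
    have h1 := abs_c_le x
    have h2 : |αs x - v| ≤ 2 := by
      have := adm_abs hadm x
      rw [abs_le] at this hv1 ⊢
      constructor <;> linarith [this.1, this.2, hv1.1, hv1.2]
    have h3 := Ia_bdd hadm hx
    nlinarith [abs_nonneg (c x), abs_nonneg (αs x - v), abs_nonneg (Ia αs x),
      mul_le_mul h1 h2 (abs_nonneg _) (by norm_num : (0:ℝ) ≤ 6),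
      mul_nonneg (abs_nonneg (c x)) (abs_nonneg (αs x - v))]
  have hfII : ∀ u w : ℝ, u ∈ Icc (0:ℝ) 1 → w ∈ Icc (0:ℝ) 1 →
      IntervalIntegrable f volume u w := fun u w hu hw => II01 hfm hfb hu hw
  have main : ∀ N : ℕ, 0 < N → (∫ s in a..b, f s) ≤ 12 * (b - a)^2 / N := by
    intro N hN
    have hNR : (0:ℝ) < N := Nat.cast_pos.2 hN
    set h := (b - a) / N with hhdef
    have hh0 : 0 ≤ h := div_nonneg (by linarith) (le_of_lt hNR)
    have hmem : ∀ i : ℕ, i ≤ N → a + i * h ∈ Icc (0:ℝ) 1 := by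
      intro i hi
      have hiR : (i:ℝ) ≤ N := Nat.cast_le.2 hi
      have h1 : (i:ℝ) * h ≤ N * h := by nlinarith
      have h2 : (N:ℝ) * h = b - a := by rw [hhdef]; field_simp
      constructor
      · nlinarith [mul_nonneg (Nat.cast_nonneg i : (0:ℝ) ≤ i) hh0]
      · nlinarith
    have claim : ∀ i : ℕ, i ≤ N → (∫ s in a..(a + i * h), f s) ≤ 12 * i * h^2 := by
      intro i
      induction i with
      | zero =>
        intro _
        norm_num
      | succ i ih =>
        intro hiN
        have hi : i ≤ N := le_of_lt (Nat.lt_of_succ_le hiN)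
        have hstep : (∫ s in (a + i*h)..(a + (i+1:ℕ)*h), f s) ≤ 12 * h^2 := by
          have hkey := key1 hadm hopt (p := a + i*h) (q := a + (i+1:ℕ)*h)
            (hmem i hi).1 (by push_cast; nlinarith) (hmem (i+1) hiN).2 hv
          have : (a + ((i:ℕ)+1:ℕ)*h - (a + i*h)) = h := by push_cast; ring
          rw [this] at hkey
          linarith [hkey]
        have hadd : (∫ s in a..(a + (i+1:ℕ)*h), f s)
            = (∫ s in a..(a + i*h), f s) + ∫ s in (a + i*h)..(a + (i+1:ℕ)*h), f s :=
          (intervalIntegral.integral_add_adjacent_intervals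
            (hfII _ _ ⟨ha, hab.trans hb⟩ (hmem i hi))
            (hfII _ _ (hmem i hi) (hmem (i+1) hiN))).symm
        rw [hadd]
        have := ih hi
        push_cast at this hstep ⊢
        nlinarith
    have hfin := claim N le_rfl
    have hNb : a + N * h = b := by rw [hhdef]; field_simp; ring
    rw [hNb] at hfin
    have : 12 * (N:ℝ) * h^2 = 12 * (b-a)^2 / N := by
      rw [hhdef]; field_simp
    linarith [hfin, this.symm.le, this.le]
  by_contra hpos
  push_neg at hpos
  obtain ⟨N, hNgt⟩ := exists_nat_gt (max 1 (12 * (b - a)^2 / (∫ s in a..b, f s)))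
  have hN1 : (1:ℝ) < N := lt_of_le_of_lt (le_max_left _ _) hNgt
  have hN0 : 0 < N := by exact_mod_cast (by linarith : (0:ℝ) < N)
  have h2 : 12 * (b - a)^2 / (∫ s in a..b, f s) < N :=
    lt_of_le_of_lt (le_max_right _ _) hNgt
  have h3 := main N hN0
  rw [div_lt_iff₀ hpos] at h2
  rw [le_div_iff₀ (by exact_mod_cast hN0 : (0:ℝ) < N)] at h3
  nlinarith
lemma Ia_pos_false (hadm : Admissible αs)
    (hopt : ∀ t ∈ Ico (0 : ℝ) 1, ∀ α : ℝ → ℝ, Admissible α → J t αs ≤ J t α)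
    {t₀ : ℝ} (ht0 : 0 ≤ t₀) (ht1 : t₀ < 1) (hA : 0 < Ia αs t₀) : False := by
  set m := Ia αs t₀ with hm
  set S : Set ℝ := Icc t₀ 1 ∩ (Ia αs) ⁻¹' (Iic (m/2)) with hSdef
  have hS1 : (1:ℝ) ∈ S := by
    constructor
    · exact ⟨le_of_lt ht1, le_rfl⟩
    · simp only [mem_preimage, mem_Iic, Ia_one]; linarith
  have hSne : S.Nonempty := ⟨1, hS1⟩
  have hbdd : BddBelow S := ⟨t₀, fun x hx => hx.1.1⟩
  have hclosed : IsClosed S :=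
    IsClosed.inter isClosed_Icc (isClosed_Iic.preimage (Ia_cont hadm))
  set u := sInf S with hu
  have huS : u ∈ S := hclosed.csInf_mem hSne hbdd
  have hut0 : t₀ ≤ u := huS.1.1
  have hu1 : u ≤ 1 := huS.1.2
  have huA : Ia αs u ≤ m/2 := huS.2
  have ht0u : t₀ < u := by
    rcases eq_or_lt_of_le hut0 with h | h
    · exfalso; rw [← h] at huA; rw [← hm] at huA; linarith
    · exact h
  have hlow : ∀ x ∈ Ico t₀ u, m/2 ≤ Ia αs x := by
    intro x hx
    by_contra hcon
    push_neg at hcon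
    have hxS : x ∈ S := ⟨⟨hx.1, le_trans (le_of_lt hx.2) hu1⟩, le_of_lt hcon⟩
    exact absurd (csInf_le hbdd hxS) (not_le.2 hx.2)
  have hAu : m/2 ≤ Ia αs u := by
    have hne : Filter.NeBot (nhdsWithin u (Ioo t₀ u)) := by
      rw [← mem_closure_iff_nhdsWithin_neBot, closure_Ioo (ne_of_lt ht0u)]
      exact ⟨le_of_lt ht0u, le_rfl⟩
    haveI := hne
    refine ge_of_tendsto (Continuous.continuousWithinAt (Ia_cont hadm)
      (s := Ioo t₀ u) (x := u)) ?_
    exact eventually_nhdsWithin_of_forall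
      (fun x hx => hlow x ⟨le_of_lt hx.1, hx.2⟩)
  have hAicc : ∀ x ∈ Icc t₀ u, m/2 ≤ Ia αs x := by
    intro x hx
    rcases eq_or_lt_of_le hx.2 with h | h
    · rw [h]; exact hAu
    · exact hlow x ⟨hx.1, h⟩
  have hu_lt1 : u < 1 := by
    rcases eq_or_lt_of_le hu1 with h | h
    · exfalso; rw [h, Ia_one] at huA hAu; linarith
    · exact h
  have hkey := key2 hadm hopt (v := -1) ht0 (le_of_lt ht0u) hu1 (Or.inr rfl)
  have hmono : (∫ x in t₀..u, (m/2) * (αs x + 1))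
      ≤ ∫ x in t₀..u, c x * (αs x - (-1)) * Ia αs x := by
    apply intervalIntegral.integral_mono_on (le_of_lt ht0u)
    · exact intervalIntegrable_of_bdd ((hadm.1.add_const 1).const_mul _)
        (C := |m/2| * 2) (fun x _ => by
          rw [abs_mul]
          have := adm_abs hadm x
          have h2 : |αs x + 1| ≤ 2 := by rw [abs_le] at this ⊢; constructor <;> linarith [this.1, this.2]
          nlinarith [abs_nonneg (m/2)])
    · exact II01 ((c_measurable.mul (hadm.1.sub measurable_const)).mul
        (Ia_cont hadm).measurable) (C := 12) (fun x hx => by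
          have h1 := abs_c_le x
          have h2 : |αs x - (-1)| ≤ 2 := by
            have := adm_abs hadm x
            rw [abs_le] at this ⊢; constructor <;> linarith [this.1, this.2]
          have h3 := Ia_bdd hadm hx
          show |c x * (αs x - (-1)) * Ia αs x| ≤ 12
          rw [abs_mul, abs_mul]
          nlinarith [abs_nonneg (c x), abs_nonneg (αs x - (-1)), abs_nonneg (Ia αs x),
            mul_le_mul h1 h2 (abs_nonneg _) (by norm_num : (0:ℝ) ≤ 6),
            mul_nonneg (abs_nonneg (c x)) (abs_nonneg (αs x - (-1)))])
        ⟨ht0, le_of_lt ht1⟩ ⟨ht0.trans hut0, hu1⟩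
    · intro x hx
      have hc : 1 ≤ c x := c_one_le (ht0.trans hx.1) (lt_of_le_of_lt hx.2 hu_lt1)
      have hAx := hAicc x hx
      have hα : 0 ≤ αs x + 1 := by linarith [(hadm.2 x).1]
      have hcA : m/2 ≤ c x * Ia αs x := by nlinarith
      nlinarith
  have hcompute : (∫ x in t₀..u, (m/2) * (αs x + 1))
      = (m/2) * ((m - Ia αs u) + (u - t₀)) := by
    rw [intervalIntegral.integral_const_mul]
    congr 1
    have h1 : (∫ x in t₀..u, (αs x + 1))
        = (∫ x in t₀..u, αs x) + ∫ x in t₀..u, (1:ℝ) :=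
      intervalIntegral.integral_add (adm_II hadm t₀ u) intervalIntegrable_const
    rw [h1, ← Ia_sub hadm, intervalIntegral.integral_const, smul_eq_mul, ← hm]
    ring
  rw [hcompute] at hmono
  nlinarith [hmono, hkey]

lemma adm_neg (h : Admissible αs) : Admissible (fun x => -αs x) := by
  constructor
  · exact h.1.neg
  · intro x
    have h2 := h.2 x
    rw [mem_Icc] at h2
    show -αs x ∈ Icc (-1:ℝ) 1
    rw [mem_Icc]
    exact ⟨by linarith [h2.2], by linarith [h2.1]⟩

lemma Ia_neg (α : ℝ → ℝ) (s : ℝ) : Ia (fun x => -α x) s = - Ia α s := by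
  unfold Ia
  exact intervalIntegral.integral_neg

lemma J_neg (t : ℝ) (α : ℝ → ℝ) : J t (fun x => -α x) = J t α := by
  rw [J_eq, J_eq]
  apply intervalIntegral.integral_congr
  intro x _
  show c x * (-α x) * Ia (fun y => -α y) x = c x * α x * Ia α x
  rw [Ia_neg]
  ring

lemma Ia_zero (hadm : Admissible αs)
    (hopt : ∀ t ∈ Ico (0 : ℝ) 1, ∀ α : ℝ → ℝ, Admissible α → J t αs ≤ J t α)
    {t : ℝ} (ht0 : 0 ≤ t) (ht1 : t ≤ 1) : Ia αs t = 0 := by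
  rcases eq_or_lt_of_le ht1 with h | h
  · rw [h, Ia_one]
  by_contra hne
  rcases lt_or_gt_of_ne hne with hneg | hpos
  · have hadm' := adm_neg hadm
    have hopt' : ∀ t' ∈ Ico (0 : ℝ) 1, ∀ α : ℝ → ℝ, Admissible α →
        J t' (fun x => -αs x) ≤ J t' α := by
      intro t' ht' α' hα'
      rw [J_neg]
      exact hopt t' ht' α' hα'
    apply Ia_pos_false hadm' hopt' ht0 h
    rw [Ia_neg]
    linarith
  · exact Ia_pos_false hadm hopt ht0 h hpos

lemma J_zero_opt (hadm : Admissible αs)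
    (hopt : ∀ t ∈ Ico (0 : ℝ) 1, ∀ α : ℝ → ℝ, Admissible α → J t αs ≤ J t α) :
    J 0 αs = 0 := by
  rw [J_eq]
  have : (∫ s in (0:ℝ)..1, c s * αs s * Ia αs s) = ∫ s in (0:ℝ)..1, (0:ℝ) := by
    apply intervalIntegral.integral_congr
    intro x hx
    rw [uIcc_of_le (by norm_num : (0:ℝ) ≤ 1)] at hx
    show c x * αs x * Ia αs x = 0
    rw [Ia_zero hadm hopt hx.1 hx.2, mul_zero]
  rw [this, intervalIntegral.integral_zero]
end Main
noncomputable def ahat : ℝ → ℝ := fun x =>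
  if 3/8 ≤ x ∧ x < 1/2 then (-1:ℝ) else if 1/2 ≤ x ∧ x < 5/8 then 1 else 0

lemma ahat_adm : Admissible ahat := by
  constructor
  · apply Measurable.ite
    · have : {x:ℝ | 3/8 ≤ x ∧ x < 1/2} = Ico (3/8:ℝ) (1/2) := rfl
      rw [this]; exact measurableSet_Ico
    · exact measurable_const
    · apply Measurable.ite
      · have : {x:ℝ | 1/2 ≤ x ∧ x < 5/8} = Ico (1/2:ℝ) (5/8) := rfl
        rw [this]; exact measurableSet_Ico
      · exact measurable_const
      · exact measurable_const
  · intro x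
    unfold ahat
    split_ifs <;> rw [mem_Icc] <;> norm_num

lemma ahat_right {x : ℝ} (hx : 5/8 ≤ x) : ahat x = 0 := by
  unfold ahat
  rw [if_neg (fun h => absurd h.2 (not_lt.2 (by linarith))),
    if_neg (fun h => absurd h.2 (not_lt.2 (by linarith)))]

lemma ahat_left {x : ℝ} (hx : x < 3/8) : ahat x = 0 := by
  unfold ahat
  rw [if_neg (fun h => absurd h.1 (not_le.2 (by linarith))),
    if_neg (fun h => absurd h.1 (not_le.2 (by linarith)))]

lemma Ia_ahat_58 : Ia ahat (5/8) = 0 := by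
  unfold Ia
  rw [intervalIntegral_congr_Ioo (by norm_num : (5/8:ℝ) ≤ 1)
    (g := fun _ => (0:ℝ)) (fun x hx => ahat_right (le_of_lt hx.1))]
  exact intervalIntegral.integral_zero

lemma Ia_ahat_mid {s : ℝ} (h1 : 1/2 ≤ s) (h2 : s ≤ 5/8) : Ia ahat s = 5/8 - s := by
  have hsplit : Ia ahat s = (∫ x in s..(5/8:ℝ), ahat x) + Ia ahat (5/8) :=
    (intervalIntegral.integral_add_adjacent_intervals (adm_II ahat_adm s (5/8))
      (adm_II ahat_adm (5/8) 1)).symm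
  have hc : (∫ x in s..(5/8:ℝ), ahat x) = ∫ x in s..(5/8:ℝ), (1:ℝ) := by
    apply intervalIntegral_congr_Ioo h2
    intro x hx
    unfold ahat
    rw [if_neg (fun h => absurd h.2 (not_lt.2 (by linarith [hx.1]))),
      if_pos ⟨by linarith [hx.1], hx.2⟩]
  rw [hsplit, Ia_ahat_58, hc, intervalIntegral.integral_const, smul_eq_mul]
  ring

lemma Ia_ahat_leftint {s : ℝ} (h1 : 3/8 ≤ s) (h2 : s ≤ 1/2) : Ia ahat s = s - 3/8 := by
  have hsplit : Ia ahat s = (∫ x in s..(1/2:ℝ), ahat x) + Ia ahat (1/2) :=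
    (intervalIntegral.integral_add_adjacent_intervals (adm_II ahat_adm s (1/2))
      (adm_II ahat_adm (1/2) 1)).symm
  have hc : (∫ x in s..(1/2:ℝ), ahat x) = ∫ x in s..(1/2:ℝ), (-1:ℝ) := by
    apply intervalIntegral_congr_Ioo h2
    intro x hx
    unfold ahat
    rw [if_pos ⟨by linarith [hx.1], hx.2⟩]
  rw [hsplit, hc, Ia_ahat_mid (le_refl (1/2:ℝ)) (by norm_num),
    intervalIntegral.integral_const, smul_eq_mul]
  ring

open intervalIntegral in
lemma my_integral_id {a b : ℝ} : ∫ x in a..b, x = (b^2 - a^2)/2 := integral_id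

open intervalIntegral in
lemma my_II_id {a b : ℝ} : IntervalIntegrable (fun x : ℝ => x) volume a b :=
  intervalIntegrable_id

lemma tn0' : tn 0 = 0 := tn_zero
lemma tn1' : tn 1 = 1/2 := by norm_num [tn]
lemma tn2' : tn 2 = 3/4 := by norm_num [tn]
lemma sn0' : sn 0 = 3/8 := by norm_num [sn, tn]
lemma sn1' : sn 1 = 11/16 := by norm_num [sn, tn]

lemma J_ahat : J 0 ahat = -(5/128) := by
  rw [J_eq]
  have m0 : (0:ℝ) ∈ Icc (0:ℝ) 1 := by norm_num
  have m38 : (3/8:ℝ) ∈ Icc (0:ℝ) 1 := by norm_num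
  have m12 : (1/2:ℝ) ∈ Icc (0:ℝ) 1 := by norm_num
  have m58 : (5/8:ℝ) ∈ Icc (0:ℝ) 1 := by norm_num
  have m1 : (1:ℝ) ∈ Icc (0:ℝ) 1 := by norm_num
  have hs1 : (∫ s in (0:ℝ)..1, c s * ahat s * Ia ahat s)
      = (∫ s in (0:ℝ)..(3/8:ℝ), c s * ahat s * Ia ahat s)
        + ∫ s in (3/8:ℝ)..1, c s * ahat s * Ia ahat s :=
    (intervalIntegral.integral_add_adjacent_intervals
      (integrand_II ahat_adm m0 m38) (integrand_II ahat_adm m38 m1)).symm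
  have hs2 : (∫ s in (3/8:ℝ)..1, c s * ahat s * Ia ahat s)
      = (∫ s in (3/8:ℝ)..(1/2:ℝ), c s * ahat s * Ia ahat s)
        + ∫ s in (1/2:ℝ)..1, c s * ahat s * Ia ahat s :=
    (intervalIntegral.integral_add_adjacent_intervals
      (integrand_II ahat_adm m38 m12) (integrand_II ahat_adm m12 m1)).symm
  have hs3 : (∫ s in (1/2:ℝ)..1, c s * ahat s * Ia ahat s)
      = (∫ s in (1/2:ℝ)..(5/8:ℝ), c s * ahat s * Ia ahat s)
        + ∫ s in (5/8:ℝ)..1, c s * ahat s * Ia ahat s :=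
    (intervalIntegral.integral_add_adjacent_intervals
      (integrand_II ahat_adm m12 m58) (integrand_II ahat_adm m58 m1)).symm
  have hP1 : (∫ s in (0:ℝ)..(3/8:ℝ), c s * ahat s * Ia ahat s) = 0 := by
    rw [intervalIntegral_congr_Ioo (by norm_num : (0:ℝ) ≤ 3/8) (g := fun _ => (0:ℝ))
      (fun x hx => by show c x * ahat x * Ia ahat x = 0; rw [ahat_left hx.2]; ring)]
    exact intervalIntegral.integral_zero
  have hP4 : (∫ s in (5/8:ℝ)..1, c s * ahat s * Ia ahat s) = 0 := by
    rw [intervalIntegral_congr_Ioo (by norm_num : (5/8:ℝ) ≤ 1) (g := fun _ => (0:ℝ))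
      (fun x hx => by
        show c x * ahat x * Ia ahat x = 0
        rw [ahat_right (le_of_lt hx.1)]; ring)]
    exact intervalIntegral.integral_zero
  have hP2 : (∫ s in (3/8:ℝ)..(1/2:ℝ), c s * ahat s * Ia ahat s) = -(3/64) := by
    have hcongr : (∫ s in (3/8:ℝ)..(1/2:ℝ), c s * ahat s * Ia ahat s)
        = ∫ s in (3/8:ℝ)..(1/2:ℝ), (-6) * (s - 3/8) := by
      apply intervalIntegral_congr_Ioo (by norm_num)
      intro x hx
      have hc : c x = 6 := by
        have := c_block (n := 0) (x := x) (by rw [tn0']; linarith [hx.1]) (by rw [tn1']; exact hx.2)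
        rw [this, if_neg (not_lt.2 (by rw [sn0']; linarith [hx.1]))]
      have ha : ahat x = -1 := by
        unfold ahat
        rw [if_pos ⟨le_of_lt hx.1, hx.2⟩]
      show c x * ahat x * Ia ahat x = -6 * (x - 3/8)
      rw [hc, ha, Ia_ahat_leftint (le_of_lt hx.1) (le_of_lt hx.2)]
      ring
    rw [hcongr, intervalIntegral.integral_const_mul]
    have : (∫ s in (3/8:ℝ)..(1/2:ℝ), (s - 3/8))
        = (∫ s in (3/8:ℝ)..(1/2:ℝ), s) - ∫ s in (3/8:ℝ)..(1/2:ℝ), (3/8:ℝ) :=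
      intervalIntegral.integral_sub my_II_id
        intervalIntegrable_const
    rw [this, my_integral_id, intervalIntegral.integral_const, smul_eq_mul]
    norm_num
  have hP3 : (∫ s in (1/2:ℝ)..(5/8:ℝ), c s * ahat s * Ia ahat s) = 1/128 := by
    have hcongr : (∫ s in (1/2:ℝ)..(5/8:ℝ), c s * ahat s * Ia ahat s)
        = ∫ s in (1/2:ℝ)..(5/8:ℝ), (5/8 - s) := by
      apply intervalIntegral_congr_Ioo (by norm_num)
      intro x hx
      have hc : c x = 1 := by
        have := c_block (n := 1) (x := x) (by rw [tn1']; exact le_of_lt hx.1)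
          (by rw [tn2']; linarith [hx.2])
        rw [this, if_pos (by rw [sn1']; linarith [hx.2])]
      have ha : ahat x = 1 := by
        unfold ahat
        rw [if_neg (fun h => absurd h.2 (not_lt.2 (le_of_lt hx.1))),
          if_pos ⟨le_of_lt hx.1, hx.2⟩]
      show c x * ahat x * Ia ahat x = 5/8 - x
      rw [hc, ha, Ia_ahat_mid (le_of_lt hx.1) (le_of_lt hx.2)]
      ring
    have : (∫ s in (1/2:ℝ)..(5/8:ℝ), ((5/8:ℝ) - s))
        = (∫ s in (1/2:ℝ)..(5/8:ℝ), (5/8:ℝ)) - ∫ s in (1/2:ℝ)..(5/8:ℝ), s :=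
      intervalIntegral.integral_sub intervalIntegrable_const
        my_II_id
    rw [hcongr, this, my_integral_id, intervalIntegral.integral_const,
      smul_eq_mul]
    norm_num
  rw [hs1, hs2, hs3, hP1, hP2, hP3, hP4]
  norm_num

theorem stmt13 :
    ¬ ∃ αs : ℝ → ℝ, Admissible αs ∧
        ∀ t ∈ Ico (0 : ℝ) 1, ∀ α : ℝ → ℝ, Admissible α → J t αs ≤ J t α := by
  rintro ⟨αs, hadm, hopt⟩
  have h0 := J_zero_opt hadm hopt
  have hle := hopt 0 ⟨le_rfl, by norm_num⟩ ahat ahat_adm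
  rw [h0, J_ahat] at hle
  norm_num at hle
end

section
/- Let α, α* : [0,1] → [-1,1] be measurable, t ∈ [0,1), and suppose c is constant equal to c(t) > 0 on [t, t+δ₀]. Writing α^δ := α·1_{[0,t+δ)} + α*·1_{[t+δ,1]}, for 0 < δ ≤ δ₀ one has J(t, α^δ) − J(t, α*) = c(t)·Y*(t)·∫_t^{t+δ}(α(s) − α*(s)) ds + O(δ²), where Y*(t) := ∫_t^1 α*(r) dr, and the O(δ²) term is bounded in absolute value by C·δ² for a constant C independent of δ. -/
open MeasureTheory Set

lemma II_of_bdd {f : ℝ → ℝ} {M : ℝ} (hf : Measurable f) {a b : ℝ}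
    (hb : ∀ x ∈ Set.uIoc a b, |f x| ≤ M) : IntervalIntegrable f volume a b := by
  rw [intervalIntegrable_iff]
  refine Measure.integrableOn_of_bounded ?_ hf.aestronglyMeasurable (M := M)
    ((ae_restrict_iff' measurableSet_uIoc).mpr (ae_of_all _ fun x hx => ?_))
  · exact ((measure_mono Set.uIoc_subset_uIcc).trans_lt (by rw [Real.volume_interval]; exact ENNReal.ofReal_lt_top)).ne
  · simpa [Real.norm_eq_abs] using hb x hx

noncomputable def Jc (c : ℝ → ℝ) (t : ℝ) (α : ℝ → ℝ) : ℝ :=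
  ∫ s in t..1, c s * α s * ∫ r in s..1, α r

theorem stmt19 (t δ₀ : ℝ) (ht : t ∈ Ico (0 : ℝ) 1) (hδ₀ : 0 < δ₀) (h1 : t + δ₀ ≤ 1)
    (c α αs : ℝ → ℝ) (hc : Measurable c) (hcb : ∃ M, ∀ x, |c x| ≤ M)
    (hcc : ∀ s ∈ Icc t (t + δ₀), c s = c t) (hct : 0 < c t)
    (hα : Measurable α) (hαb : ∀ x, α x ∈ Icc (-1 : ℝ) 1)
    (hαs : Measurable αs) (hαsb : ∀ x, αs x ∈ Icc (-1 : ℝ) 1) :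
    ∃ C : ℝ, ∀ δ, 0 < δ → δ ≤ δ₀ →
      |(Jc c t (fun x => if x < t + δ then α x else αs x) - Jc c t αs)
        - c t * (∫ r in t..1, αs r) * ∫ s in t..(t + δ), (α s - αs s)| ≤ C * δ ^ 2 := by
  obtain ⟨M, hM⟩ := hcb
  have hM0 : 0 ≤ M := (abs_nonneg _).trans (hM 0)
  have ht0 : (0:ℝ) ≤ t := ht.1
  refine ⟨3 * c t, ?_⟩
  intro δ hδ hδδ
  have hδ1 : t + δ ≤ 1 := by linarith
  set A : ℝ → ℝ := fun x => if x < t + δ then α x else αs x with hAdef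
  have hαb1 : ∀ x, |α x| ≤ 1 := fun x => abs_le.mpr ⟨(hαb x).1, (hαb x).2⟩
  have hαsb1 : ∀ x, |αs x| ≤ 1 := fun x => abs_le.mpr ⟨(hαsb x).1, (hαsb x).2⟩
  have hAm : Measurable A := Measurable.ite (measurableSet_lt measurable_id measurable_const) hα hαs
  have hAb1 : ∀ x, |A x| ≤ 1 := by
    intro x
    show |if x < t + δ then α x else αs x| ≤ 1
    by_cases h : x < t + δ
    · rw [if_pos h]; exact hαb1 x
    · rw [if_neg h]; exact hαsb1 x
  -- basic interval integrabilities
  have hIIA : ∀ a b : ℝ, IntervalIntegrable A volume a b := fun a b => II_of_bdd hAm (fun x _ => hAb1 x)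
  have hIIαs : ∀ a b : ℝ, IntervalIntegrable αs volume a b := fun a b => II_of_bdd hαs (fun x _ => hαsb1 x)
  have hIIα : ∀ a b : ℝ, IntervalIntegrable α volume a b := fun a b => II_of_bdd hα (fun x _ => hαb1 x)
  set YA : ℝ → ℝ := fun s => ∫ r in s..1, A r with hYAdef
  set Ys : ℝ → ℝ := fun s => ∫ r in s..1, αs r with hYsdef
  have hYAc : Continuous YA := by
    have h := (intervalIntegral.continuous_primitive hIIA 1).neg
    convert h using 2 with s
    rw [hYAdef]
    exact funext fun s => intervalIntegral.integral_symm 1 s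
  have hYsc : Continuous Ys := by
    have h := (intervalIntegral.continuous_primitive hIIαs 1).neg
    convert h using 2 with s
    rw [hYsdef]
    exact funext fun s => intervalIntegral.integral_symm 1 s
  have hYAb : ∀ s ∈ Icc t 1, |YA s| ≤ 1 := by
    intro s hs
    have h := intervalIntegral.norm_integral_le_of_norm_le_const (f := A) (a := s) (b := 1) (C := 1)
      (fun x _ => by rw [Real.norm_eq_abs]; exact hAb1 x)
    rw [Real.norm_eq_abs] at h
    have : |1 - s| ≤ 1 := by rw [abs_of_nonneg (by linarith [hs.2])]; linarith [hs.1, ht0]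
    calc |YA s| ≤ 1 * |1 - s| := h
    _ ≤ 1 := by linarith
  have hYsb : ∀ s ∈ Icc t 1, |Ys s| ≤ 1 := by
    intro s hs
    have h := intervalIntegral.norm_integral_le_of_norm_le_const (f := αs) (a := s) (b := 1) (C := 1)
      (fun x _ => by rw [Real.norm_eq_abs]; exact hαsb1 x)
    rw [Real.norm_eq_abs] at h
    have : |1 - s| ≤ 1 := by rw [abs_of_nonneg (by linarith [hs.2])]; linarith [hs.1, ht0]
    calc |Ys s| ≤ 1 * |1 - s| := h
    _ ≤ 1 := by linarith
  -- tail integrals agree on [t+δ, 1]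
  have htailY : ∀ s, t + δ ≤ s → YA s = Ys s := by
    intro s hs
    refine intervalIntegral.integral_congr fun x hx => ?_
    rcases le_or_gt s 1 with h | h
    · rw [uIcc_of_le h] at hx
      have : ¬ x < t + δ := by push_neg; exact hs.trans hx.1
      simp [hAdef, this]
    · rw [uIcc_of_ge h.le] at hx
      have : ¬ x < t + δ := by push_neg; linarith [hx.1]
      simp [hAdef, this]
  -- integrands
  set FA : ℝ → ℝ := fun s => c s * A s * YA s with hFAdef
  set Fs : ℝ → ℝ := fun s => c s * αs s * Ys s with hFsdef
  have hFAm : Measurable FA := (hc.mul hAm).mul hYAc.measurable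
  have hFsm : Measurable Fs := (hc.mul hαs).mul hYsc.measurable
  have hFbd : ∀ (F : ℝ → ℝ) (g Y : ℝ → ℝ), (∀ x, |g x| ≤ 1) → (∀ s ∈ Icc t 1, |Y s| ≤ 1) →
      (∀ s, F s = c s * g s * Y s) → ∀ x ∈ Icc t 1, |F x| ≤ M := by
    intro F g Y hg hY hF x hx
    rw [hF x, abs_mul, abs_mul]
    calc |c x| * |g x| * |Y x| ≤ M * 1 * 1 := by
          apply mul_le_mul (mul_le_mul (hM x) (hg x) (abs_nonneg _) hM0) (hY x hx) (abs_nonneg _)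
          positivity
    _ = M := by ring
  have hFAbd := hFbd FA A YA hAb1 hYAb (fun s => rfl)
  have hFsbd := hFbd Fs αs Ys hαsb1 hYsb (fun s => rfl)
  have hsub1 : Set.uIoc t (t+δ) ⊆ Icc t 1 := by
    rw [uIoc_of_le (by linarith)]; exact fun x hx => ⟨hx.1.le, hx.2.trans hδ1⟩
  have hsub2 : Set.uIoc (t+δ) 1 ⊆ Icc t 1 := by
    rw [uIoc_of_le hδ1]; exact fun x hx => ⟨by linarith [hx.1], hx.2⟩
  have hsub3 : Set.uIoc t 1 ⊆ Icc t 1 := by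
    rw [uIoc_of_le (by linarith)]; exact fun x hx => ⟨hx.1.le, hx.2⟩
  have hIIFA1 : IntervalIntegrable FA volume t (t+δ) := II_of_bdd hFAm (fun x hx => hFAbd x (hsub1 hx))
  have hIIFA2 : IntervalIntegrable FA volume (t+δ) 1 := II_of_bdd hFAm (fun x hx => hFAbd x (hsub2 hx))
  have hIIFs1 : IntervalIntegrable Fs volume t (t+δ) := II_of_bdd hFsm (fun x hx => hFsbd x (hsub1 hx))
  have hIIFs2 : IntervalIntegrable Fs volume (t+δ) 1 := II_of_bdd hFsm (fun x hx => hFsbd x (hsub2 hx))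
  -- the difference of J's
  have hJA : Jc c t A = (∫ s in t..(t+δ), FA s) + ∫ s in (t+δ)..1, FA s :=
    (intervalIntegral.integral_add_adjacent_intervals hIIFA1 hIIFA2).symm
  have hJs : Jc c t αs = (∫ s in t..(t+δ), Fs s) + ∫ s in (t+δ)..1, Fs s :=
    (intervalIntegral.integral_add_adjacent_intervals hIIFs1 hIIFs2).symm
  have htail : (∫ s in (t+δ)..1, FA s) = ∫ s in (t+δ)..1, Fs s := by
    refine intervalIntegral.integral_congr fun x hx => ?_
    rw [uIcc_of_le hδ1] at hx
    have hx1 : ¬ x < t + δ := by push_neg; exact hx.1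
    simp only [hFAdef, hFsdef, htailY x hx.1]
    congr 1
    simp [hAdef, hx1]
  have hdiff : Jc c t A - Jc c t αs = ∫ s in t..(t+δ), (FA s - Fs s) := by
    rw [hJA, hJs, htail, intervalIntegral.integral_sub hIIFA1 hIIFs1]; ring
  -- replace FA - Fs by G a.e. on (t, t+δ]
  set G : ℝ → ℝ := fun s => c t * (α s * YA s - αs s * Ys s) with hGdef
  have hGcongr : (∫ s in t..(t+δ), (FA s - Fs s)) = ∫ s in t..(t+δ), G s := by
    apply intervalIntegral.integral_congr_ae
    have h0 : ∀ᵐ x : ℝ, x ≠ t + δ := by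
      rw [ae_iff]
      have : {x : ℝ | ¬ x ≠ t + δ} = {t + δ} := by ext x; simp
      rw [this]; exact measure_singleton _
    filter_upwards [h0] with x hx hmem
    rw [uIoc_of_le (by linarith)] at hmem
    have hxlt : x < t + δ := lt_of_le_of_ne hmem.2 hx
    have hcx : c x = c t := hcc x ⟨hmem.1.le, by linarith⟩
    simp only [hFAdef, hFsdef, hGdef, hcx]
    have : A x = α x := by simp [hAdef, hxlt]
    rw [this]; ring
  -- main term as integral
  set H : ℝ → ℝ := fun s => c t * Ys t * (α s - αs s) with hHdef
  have hmain : c t * (∫ r in t..1, αs r) * (∫ s in t..(t + δ), (α s - αs s))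
      = ∫ s in t..(t+δ), H s := by
    rw [hHdef]
    rw [intervalIntegral.integral_const_mul]
  -- integrabilities of G and H
  have hGm : Measurable G := (measurable_const.mul ((hα.mul hYAc.measurable).sub (hαs.mul hYsc.measurable)))
  have hGbd : ∀ x ∈ Set.uIoc t (t+δ), |G x| ≤ c t * 2 := by
    intro x hx
    have hx' := hsub1 hx
    rw [hGdef, abs_mul, abs_of_pos hct]
    refine mul_le_mul_of_nonneg_left ?_ hct.le
    calc |α x * YA x - αs x * Ys x| ≤ |α x * YA x| + |αs x * Ys x| := abs_sub _ _
    _ ≤ 1 * 1 + 1 * 1 := by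
        rw [abs_mul, abs_mul]
        gcongr
        exacts [hαb1 x, hYAb x hx', hαsb1 x, hYsb x hx']
    _ = 2 := by ring
  have hIIG : IntervalIntegrable G volume t (t+δ) := II_of_bdd hGm hGbd
  have hIIH : IntervalIntegrable H volume t (t+δ) := by
    refine II_of_bdd ((measurable_const.mul (hα.sub hαs))) (M := |c t * Ys t| * 2) fun x hx => ?_
    show |c t * Ys t * (α x - αs x)| ≤ |c t * Ys t| * 2
    rw [abs_mul]
    refine mul_le_mul_of_nonneg_left ?_ (abs_nonneg _)
    calc |α x - αs x| ≤ |α x| + |αs x| := abs_sub _ _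
    _ ≤ 2 := by linarith [hαb1 x, hαsb1 x]
  -- key pointwise bound
  have hkey : ∀ x ∈ Set.uIoc t (t+δ), |G x - H x| ≤ c t * (3 * δ) := by
    intro x hx
    rw [uIoc_of_le (by linarith)] at hx
    have hx1 : t < x := hx.1
    have hx2 : x ≤ t + δ := hx.2
    -- |Ys x - Ys t| ≤ δ
    have hYs_split : Ys t = (∫ r in t..x, αs r) + Ys x :=
      (intervalIntegral.integral_add_adjacent_intervals (hIIαs t x) (hIIαs x 1)).symm
    have hb1 : |Ys x - Ys t| ≤ δ := by
      rw [hYs_split]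
      have h := intervalIntegral.norm_integral_le_of_norm_le_const (f := αs) (a := t) (b := x) (C := 1)
        (fun r _ => by rw [Real.norm_eq_abs]; exact hαsb1 r)
      rw [Real.norm_eq_abs] at h
      have : |x - t| ≤ δ := by rw [abs_of_pos (by linarith)]; linarith
      calc |Ys x - ((∫ r in t..x, αs r) + Ys x)| = |∫ r in t..x, αs r| := by rw [abs_sub_comm]; ring_nf
      _ ≤ 1 * |x - t| := h
      _ ≤ δ := by linarith
    -- |YA x - Ys t| ≤ 2δ
    have hYA_split : YA x = (∫ r in x..(t+δ), A r) + YA (t+δ) :=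
      (intervalIntegral.integral_add_adjacent_intervals (hIIA x (t+δ)) (hIIA (t+δ) 1)).symm
    have hYs_split2 : Ys t = (∫ r in t..(t+δ), αs r) + Ys (t+δ) :=
      (intervalIntegral.integral_add_adjacent_intervals (hIIαs t (t+δ)) (hIIαs (t+δ) 1)).symm
    have hb2 : |YA x - Ys t| ≤ 2 * δ := by
      rw [hYA_split, hYs_split2, htailY (t+δ) le_rfl]
      have h1 := intervalIntegral.norm_integral_le_of_norm_le_const (f := A) (a := x) (b := t+δ) (C := 1)
        (fun r _ => by rw [Real.norm_eq_abs]; exact hAb1 r)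
      have h2 := intervalIntegral.norm_integral_le_of_norm_le_const (f := αs) (a := t) (b := t+δ) (C := 1)
        (fun r _ => by rw [Real.norm_eq_abs]; exact hαsb1 r)
      rw [Real.norm_eq_abs] at h1 h2
      have e1 : |t + δ - x| ≤ δ := by rw [abs_of_nonneg (by linarith)]; linarith
      have e2 : |t + δ - t| ≤ δ := by rw [abs_of_nonneg (by linarith)]; linarith
      calc |(∫ r in x..(t+δ), A r) + Ys (t+δ) - ((∫ r in t..(t+δ), αs r) + Ys (t+δ))|
          = |(∫ r in x..(t+δ), A r) - (∫ r in t..(t+δ), αs r)| := by ring_nf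
      _ ≤ |∫ r in x..(t+δ), A r| + |∫ r in t..(t+δ), αs r| := abs_sub _ _
      _ ≤ 1 * |t + δ - x| + 1 * |t + δ - t| := add_le_add h1 h2
      _ ≤ 2 * δ := by linarith
    -- combine
    have : G x - H x = c t * (α x * (YA x - Ys t) - αs x * (Ys x - Ys t)) := by
      rw [hGdef, hHdef]; ring
    rw [this, abs_mul, abs_of_pos hct]
    refine mul_le_mul_of_nonneg_left ?_ hct.le
    calc |α x * (YA x - Ys t) - αs x * (Ys x - Ys t)|
        ≤ |α x * (YA x - Ys t)| + |αs x * (Ys x - Ys t)| := abs_sub _ _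
    _ ≤ 1 * (2 * δ) + 1 * δ := by
        rw [abs_mul, abs_mul]
        gcongr
        all_goals first | exact hαb1 x | exact hαsb1 x | exact hb2 | exact hb1
    _ = 3 * δ := by ring
  -- finish
  show |Jc c t A - Jc c t αs - c t * (∫ r in t..1, αs r) * ∫ s in t..(t + δ), (α s - αs s)| ≤ 3 * c t * δ ^ 2
  rw [hdiff, hGcongr, hmain, ← intervalIntegral.integral_sub hIIG hIIH]
  have h := intervalIntegral.norm_integral_le_of_norm_le_const (f := fun s => G s - H s) (a := t) (b := t+δ) (C := c t * (3 * δ))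
    (fun x hx => by rw [Real.norm_eq_abs]; exact hkey x hx)
  rw [Real.norm_eq_abs] at h
  have : |t + δ - t| = δ := by rw [abs_of_pos (by linarith)]; ring_nf
  rw [this] at h
  calc |∫ s in t..(t+δ), (G s - H s)| ≤ c t * (3 * δ) * δ := h
  _ = 3 * c t * δ ^ 2 := by ring
end
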